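/- Suppose n ≥ 3 and k ≥ 3, and let σ_i(s_{-i}) = {(a,b) ∈ [k]×[k] : a < b} for every agent i and every s_{-i} (the orderings induced by value functions strictly increasing in the agent's own signal). Then the truthful polytope T(σ) has an extreme point that is not integral, i.e., some coordinate lies strictly between 0 and 1. -/

import Mathlib

namespace Stmt8
variable {n k : ℕ}


/-- Membership in the truthful polytope `T(σ)` where `σ_i(s_{-i})` is the natural strict
order `a < b` on signals, for every agent `i` and every `s_{-i}`. -/
def InT (x : Fin n → (Fin n → Fin k) → ℝ) : Prop :=
  (∀ i s, 0 ≤ x i s ∧ x i s ≤ 1) ∧ (∀ s, ∑ i, x i s = 1) ∧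
  (∀ (i : Fin n) (s : Fin n → Fin k) (a b : Fin k), a < b →
    x i (Function.update s i a) ≤ x i (Function.update s i b))

/-- halves tables -/
def HA : Fin 3 → Fin 3 → Fin 3 → ℕ :=
  ![![![1,0,0],![1,0,0],![0,0,0]],
    ![![1,0,0],![1,1,0],![2,0,2]],
    ![![1,0,0],![2,1,2],![2,0,2]]]

def HB : Fin 3 → Fin 3 → Fin 3 → ℕ :=
  ![![![1,2,2],![1,2,2],![2,2,2]],
    ![![0,0,0],![0,0,0],![0,2,0]],
    ![![0,1,0],![0,1,0],![0,2,0]]]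

def HC : Fin 3 → Fin 3 → Fin 3 → ℕ :=
  ![![![0,0,0],![0,0,0],![0,0,0]],
    ![![1,2,2],![1,1,2],![0,0,0]],
    ![![1,1,2],![0,0,0],![0,0,0]]]

lemma Hsum : ∀ a b c : Fin 3, HA a b c + HB a b c + HC a b c = 2 := by decide
lemma HAle : ∀ a b c : Fin 3, HA a b c ≤ 2 := by decide
lemma HBle : ∀ a b c : Fin 3, HB a b c ≤ 2 := by decide
lemma HCle : ∀ a b c : Fin 3, HC a b c ≤ 2 := by decide
lemma HAmono : ∀ a a' b c : Fin 3, a ≤ a' → HA a b c ≤ HA a' b c := by decide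
lemma HBmono : ∀ a b b' c : Fin 3, b ≤ b' → HB a b c ≤ HB a b' c := by decide
lemma HCmono : ∀ a b c c' : Fin 3, c ≤ c' → HC a b c ≤ HC a b c' := by decide

def cl (v : Fin k) : Fin 3 := ⟨min v.val 2, by omega⟩

def e0 (hn : 3 ≤ n) : Fin n := ⟨0, by omega⟩
def e1 (hn : 3 ≤ n) : Fin n := ⟨1, by omega⟩
def e2 (hn : 3 ≤ n) : Fin n := ⟨2, by omega⟩

def Nv (hn : 3 ≤ n) (i : Fin n) (s : Fin n → Fin k) : ℕ :=
  if i.val = 0 then HA (cl (s (e0 hn))) (cl (s (e1 hn))) (cl (s (e2 hn)))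
  else if i.val = 1 then HB (cl (s (e0 hn))) (cl (s (e1 hn))) (cl (s (e2 hn)))
  else if i.val = 2 then HC (cl (s (e0 hn))) (cl (s (e1 hn))) (cl (s (e2 hn)))
  else 0

noncomputable def Y (hn : 3 ≤ n) (i : Fin n) (s : Fin n → Fin k) : ℝ := (Nv hn i s : ℝ) / 2

lemma e01 (hn : 3 ≤ n) : e0 hn ≠ e1 hn := by simp [e0, e1, Fin.ext_iff]
lemma e02 (hn : 3 ≤ n) : e0 hn ≠ e2 hn := by simp [e0, e2, Fin.ext_iff]
lemma e12 (hn : 3 ≤ n) : e1 hn ≠ e2 hn := by simp [e1, e2, Fin.ext_iff]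

lemma sum3 (hn : 3 ≤ n) (g : Fin n → ℝ) (h : ∀ i : Fin n, 3 ≤ i.val → g i = 0) :
    ∑ i, g i = g (e0 hn) + g (e1 hn) + g (e2 hn) := by
  classical
  have hsub : ({e0 hn, e1 hn, e2 hn} : Finset (Fin n)) ⊆ Finset.univ := by
    simp
  rw [← Finset.sum_subset hsub (by
    intro i _ hi
    apply h
    simp only [Finset.mem_insert, Finset.mem_singleton, not_or] at hi
    obtain ⟨h1, h2, h3⟩ := hi
    simp only [e0, e1, e2, Fin.ext_iff] at h1 h2 h3
    omega)]
  rw [Finset.sum_insert (by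
      simp only [Finset.mem_insert, Finset.mem_singleton]
      push_neg
      exact ⟨e01 hn, e02 hn⟩),
    Finset.sum_insert (by simp [e12 hn]), Finset.sum_singleton, add_assoc]


lemma Yapp0 (hn : 3 ≤ n) (s : Fin n → Fin k) :
    Y hn (e0 hn) s = (HA (cl (s (e0 hn))) (cl (s (e1 hn))) (cl (s (e2 hn))) : ℝ) / 2 := by
  simp [Y, Nv, e0]

lemma Yapp1 (hn : 3 ≤ n) (s : Fin n → Fin k) :
    Y hn (e1 hn) s = (HB (cl (s (e0 hn))) (cl (s (e1 hn))) (cl (s (e2 hn))) : ℝ) / 2 := by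
  simp [Y, Nv, e1]

lemma Yapp2 (hn : 3 ≤ n) (s : Fin n → Fin k) :
    Y hn (e2 hn) s = (HC (cl (s (e0 hn))) (cl (s (e1 hn))) (cl (s (e2 hn))) : ℝ) / 2 := by
  simp [Y, Nv, e2]

lemma Yapp3 (hn : 3 ≤ n) (i : Fin n) (hi : 3 ≤ i.val) (s : Fin n → Fin k) :
    Y hn i s = 0 := by
  have h0 : ¬ i.val = 0 := by omega
  have h1 : ¬ i.val = 1 := by omega
  have h2 : ¬ i.val = 2 := by omega
  simp [Y, Nv, h0, h1, h2]

lemma clmono {a b : Fin k} (h : a ≤ b) : cl a ≤ cl b := by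
  simp only [cl, Fin.le_def] at *
  omega

lemma Ymem (hn : 3 ≤ n) : InT (Y (k := k) hn) := by
  refine ⟨?_, ?_, ?_⟩
  · intro i s
    constructor
    · exact div_nonneg (Nat.cast_nonneg _) (by norm_num)
    · have : Nv hn i s ≤ 2 := by
        unfold Nv
        split_ifs <;> first | exact HAle _ _ _ | exact HBle _ _ _ | exact HCle _ _ _ | norm_num
      rw [Y, div_le_one (by norm_num)]
      exact_mod_cast this
  · intro s
    rw [sum3 hn _ (fun i hi => Yapp3 hn i hi s), Yapp0, Yapp1, Yapp2]
    rw [← add_div, ← add_div, ← Nat.cast_add, ← Nat.cast_add, Hsum]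
    norm_num
  · intro i s a b hab
    rcases Nat.lt_or_ge i.val 3 with hi | hi
    · interval_cases h : i.val
      · have hie : i = e0 hn := Fin.ext h
        subst hie
        rw [Yapp0, Yapp0]
        have h1 : Function.update s (e0 hn) a (e0 hn) = a := Function.update_self _ _ _
        have h1' : Function.update s (e0 hn) b (e0 hn) = b := Function.update_self _ _ _
        have h2 : ∀ c : Fin k, Function.update s (e0 hn) c (e1 hn) = s (e1 hn) :=
          fun c => Function.update_of_ne (Ne.symm (e01 hn)) _ _
        have h3 : ∀ c : Fin k, Function.update s (e0 hn) c (e2 hn) = s (e2 hn) :=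
          fun c => Function.update_of_ne (Ne.symm (e02 hn)) _ _
        rw [h1, h1', h2, h2, h3, h3]
        have := HAmono (cl a) (cl b) (cl (s (e1 hn))) (cl (s (e2 hn))) (clmono hab.le)
        gcongr
      · have hie : i = e1 hn := Fin.ext h
        subst hie
        rw [Yapp1, Yapp1]
        have h1 : Function.update s (e1 hn) a (e1 hn) = a := Function.update_self _ _ _
        have h1' : Function.update s (e1 hn) b (e1 hn) = b := Function.update_self _ _ _
        have h2 : ∀ c : Fin k, Function.update s (e1 hn) c (e0 hn) = s (e0 hn) :=
          fun c => Function.update_of_ne (e01 hn) _ _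
        have h3 : ∀ c : Fin k, Function.update s (e1 hn) c (e2 hn) = s (e2 hn) :=
          fun c => Function.update_of_ne (Ne.symm (e12 hn)) _ _
        rw [h1, h1', h2, h2, h3, h3]
        have := HBmono (cl (s (e0 hn))) (cl a) (cl b) (cl (s (e2 hn))) (clmono hab.le)
        gcongr
      · have hie : i = e2 hn := Fin.ext h
        subst hie
        rw [Yapp2, Yapp2]
        have h1 : Function.update s (e2 hn) a (e2 hn) = a := Function.update_self _ _ _
        have h1' : Function.update s (e2 hn) b (e2 hn) = b := Function.update_self _ _ _
        have h2 : ∀ c : Fin k, Function.update s (e2 hn) c (e0 hn) = s (e0 hn) :=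
          fun c => Function.update_of_ne (e02 hn) _ _
        have h3 : ∀ c : Fin k, Function.update s (e2 hn) c (e1 hn) = s (e1 hn) :=
          fun c => Function.update_of_ne (e12 hn) _ _
        rw [h1, h1', h2, h2, h3, h3]
        have := HCmono (cl (s (e0 hn))) (cl (s (e1 hn))) (cl a) (cl b) (clmono hab.le)
        gcongr
    · rw [Yapp3 hn i hi, Yapp3 hn i hi]


def g0 (hk : 3 ≤ k) : Fin k := ⟨0, by omega⟩
def g1 (hk : 3 ≤ k) : Fin k := ⟨1, by omega⟩

def Pr (hn : 3 ≤ n) (s : Fin n → Fin k) (p q r : Fin k) : Fin n → Fin k :=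
  Function.update (Function.update (Function.update s (e2 hn) r) (e1 hn) q) (e0 hn) p

lemma Pr0 (hn : 3 ≤ n) (s : Fin n → Fin k) (p q r : Fin k) : Pr hn s p q r (e0 hn) = p :=
  Function.update_self _ _ _

lemma Pr1 (hn : 3 ≤ n) (s : Fin n → Fin k) (p q r : Fin k) : Pr hn s p q r (e1 hn) = q := by
  unfold Pr
  rw [Function.update_of_ne (Ne.symm (e01 hn)), Function.update_self]

lemma Pr2 (hn : 3 ≤ n) (s : Fin n → Fin k) (p q r : Fin k) : Pr hn s p q r (e2 hn) = r := by
  unfold Pr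
  rw [Function.update_of_ne (Ne.symm (e02 hn)), Function.update_of_ne (Ne.symm (e12 hn)),
    Function.update_self]

lemma Pru0 (hn : 3 ≤ n) (s : Fin n → Fin k) (p p' q r : Fin k) :
    Function.update (Pr hn s p q r) (e0 hn) p' = Pr hn s p' q r :=
  Function.update_idem _ _ _

lemma Pru1 (hn : 3 ≤ n) (s : Fin n → Fin k) (p q q' r : Fin k) :
    Function.update (Pr hn s p q r) (e1 hn) q' = Pr hn s p q' r := by
  unfold Pr
  rw [Function.update_comm (e01 hn), Function.update_idem]

lemma Pru2 (hn : 3 ≤ n) (s : Fin n → Fin k) (p q r r' : Fin k) :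
    Function.update (Pr hn s p q r) (e2 hn) r' = Pr hn s p q r' := by
  unfold Pr
  rw [Function.update_comm (e02 hn), Function.update_comm (e12 hn), Function.update_idem]

lemma Prself (hn : 3 ≤ n) (s : Fin n → Fin k) :
    Pr hn s (s (e0 hn)) (s (e1 hn)) (s (e2 hn)) = s := by
  funext j
  simp only [Pr, Function.update_apply]
  split_ifs with h1 h2 h3 <;> simp_all

lemma clg0 (hk : 3 ≤ k) : cl (g0 hk) = 0 := by
  apply Fin.ext
  simp [cl, g0]

lemma clg1 (hk : 3 ≤ k) : cl (g1 hk) = 1 := by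
  apply Fin.ext
  simp [cl, g1]

lemma clA2 {v : Fin k} (h : 2 ≤ v.val) : cl v = 2 := by
  apply Fin.ext
  simp only [cl]
  omega

lemma cl_eq0 (hk : 3 ≤ k) {v : Fin k} (h : cl v = 0) : v = g0 hk := by
  apply Fin.ext
  have := congrArg Fin.val h
  simp only [cl] at this
  simp only [g0]
  omega

lemma cl_eq1 (hk : 3 ≤ k) {v : Fin k} (h : cl v = 1) : v = g1 hk := by
  apply Fin.ext
  have := congrArg Fin.val h
  simp only [cl] at this
  simp only [g1]
  omega

lemma cl_eq2 {v : Fin k} (h : cl v = 2) : 2 ≤ v.val := by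
  have := congrArg Fin.val h
  simp only [cl] at this
  omega


lemma chase (hn : 3 ≤ n) (hk : 3 ≤ k) (x : Fin n → (Fin n → Fin k) → ℝ)
    (h0 : ∀ i s, Y hn i s = 0 → x i s = 0)
    (h1 : ∀ i s, Y hn i s = 1 → x i s = 1)
    (ht : ∀ (i : Fin n) (s : Fin n → Fin k) (c d : Fin k), c < d →
      Y hn i (Function.update s i c) = Y hn i (Function.update s i d) →
      x i (Function.update s i c) = x i (Function.update s i d))
    (hsx : ∀ s, ∑ i, x i s = 1) :
    x = Y hn := by
  have hs3 : ∀ s : Fin n → Fin k, x (e0 hn) s + x (e1 hn) s + x (e2 hn) s = 1 := by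
    intro s
    rw [← hsx s, sum3 hn (fun i => x i s) (fun i hi => h0 i s (Yapp3 hn i hi s))]
  have y0P : ∀ (s : Fin n → Fin k) (p q r : Fin k),
      Y hn (e0 hn) (Pr hn s p q r) = (HA (cl p) (cl q) (cl r) : ℝ) / 2 := by
    intro s p q r; rw [Yapp0, Pr0, Pr1, Pr2]
  have y1P : ∀ (s : Fin n → Fin k) (p q r : Fin k),
      Y hn (e1 hn) (Pr hn s p q r) = (HB (cl p) (cl q) (cl r) : ℝ) / 2 := by
    intro s p q r; rw [Yapp1, Pr0, Pr1, Pr2]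
  have y2P : ∀ (s : Fin n → Fin k) (p q r : Fin k),
      Y hn (e2 hn) (Pr hn s p q r) = (HC (cl p) (cl q) (cl r) : ℝ) / 2 := by
    intro s p q r; rw [Yapp2, Pr0, Pr1, Pr2]
  have c0 := clg0 hk
  have c1 := clg1 hk
  have hlt01 : g0 hk < g1 hk := by simp [g0, g1, Fin.lt_def]
  have cyc : ∀ (A2 : Fin k), 2 ≤ A2.val → ∀ s : Fin n → Fin k,
      x (e0 hn) (Pr hn s (g0 hk) (g0 hk) (g0 hk)) = 1/2 ∧
      x (e1 hn) (Pr hn s (g0 hk) (g0 hk) (g0 hk)) = 1/2 ∧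
      x (e0 hn) (Pr hn s (g0 hk) (g1 hk) (g0 hk)) = 1/2 ∧
      x (e1 hn) (Pr hn s (g0 hk) (g1 hk) (g0 hk)) = 1/2 ∧
      x (e0 hn) (Pr hn s (g1 hk) (g0 hk) (g0 hk)) = 1/2 ∧
      x (e2 hn) (Pr hn s (g1 hk) (g0 hk) (g0 hk)) = 1/2 ∧
      x (e0 hn) (Pr hn s (g1 hk) (g1 hk) (g0 hk)) = 1/2 ∧
      x (e2 hn) (Pr hn s (g1 hk) (g1 hk) (g0 hk)) = 1/2 ∧
      x (e0 hn) (Pr hn s (g1 hk) (g1 hk) (g1 hk)) = 1/2 ∧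
      x (e2 hn) (Pr hn s (g1 hk) (g1 hk) (g1 hk)) = 1/2 ∧
      x (e0 hn) (Pr hn s A2 (g1 hk) (g1 hk)) = 1/2 ∧
      x (e1 hn) (Pr hn s A2 (g1 hk) (g1 hk)) = 1/2 ∧
      x (e1 hn) (Pr hn s A2 (g0 hk) (g1 hk)) = 1/2 ∧
      x (e2 hn) (Pr hn s A2 (g0 hk) (g1 hk)) = 1/2 ∧
      x (e0 hn) (Pr hn s A2 (g0 hk) (g0 hk)) = 1/2 ∧
      x (e2 hn) (Pr hn s A2 (g0 hk) (g0 hk)) = 1/2 := by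
    intro A2 hA2 s
    have c2 : cl A2 = 2 := clA2 hA2
    have hlt0A : g0 hk < A2 := by simp only [g0, Fin.lt_def]; omega
    have hlt1A : g1 hk < A2 := by simp only [g1, Fin.lt_def]; omega
    have z1 : x (e2 hn) (Pr hn s (g0 hk) (g0 hk) (g0 hk)) = 0 := by
      apply h0
      rw [y2P, c0, show HC 0 0 0 = 0 from by decide]
      norm_num
    have z2 : x (e2 hn) (Pr hn s (g0 hk) (g1 hk) (g0 hk)) = 0 := by
      apply h0
      rw [y2P, c0, c1, show HC 0 1 0 = 0 from by decide]
      norm_num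
    have z3 : x (e1 hn) (Pr hn s (g1 hk) (g0 hk) (g0 hk)) = 0 := by
      apply h0
      rw [y1P, c0, c1, show HB 1 0 0 = 0 from by decide]
      norm_num
    have z4 : x (e1 hn) (Pr hn s (g1 hk) (g1 hk) (g0 hk)) = 0 := by
      apply h0
      rw [y1P, c0, c1, show HB 1 1 0 = 0 from by decide]
      norm_num
    have z5 : x (e1 hn) (Pr hn s (g1 hk) (g1 hk) (g1 hk)) = 0 := by
      apply h0
      rw [y1P, c1, show HB 1 1 1 = 0 from by decide]
      norm_num
    have z6 : x (e2 hn) (Pr hn s A2 (g1 hk) (g1 hk)) = 0 := by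
      apply h0
      rw [y2P, c1, c2, show HC 2 1 1 = 0 from by decide]
      norm_num
    have z7 : x (e0 hn) (Pr hn s A2 (g0 hk) (g1 hk)) = 0 := by
      apply h0
      rw [y0P, c0, c1, c2, show HA 2 0 1 = 0 from by decide]
      norm_num
    have z8 : x (e1 hn) (Pr hn s A2 (g0 hk) (g0 hk)) = 0 := by
      apply h0
      rw [y1P, c0, c2, show HB 2 0 0 = 0 from by decide]
      norm_num
    have s1 : x (e0 hn) (Pr hn s (g0 hk) (g0 hk) (g0 hk)) + x (e1 hn) (Pr hn s (g0 hk) (g0 hk) (g0 hk)) = 1 := by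
      have h' := hs3 (Pr hn s (g0 hk) (g0 hk) (g0 hk))
      rw [z1] at h'
      linarith
    have s2 : x (e0 hn) (Pr hn s (g0 hk) (g1 hk) (g0 hk)) + x (e1 hn) (Pr hn s (g0 hk) (g1 hk) (g0 hk)) = 1 := by
      have h' := hs3 (Pr hn s (g0 hk) (g1 hk) (g0 hk))
      rw [z2] at h'
      linarith
    have s3 : x (e0 hn) (Pr hn s (g1 hk) (g0 hk) (g0 hk)) + x (e2 hn) (Pr hn s (g1 hk) (g0 hk) (g0 hk)) = 1 := by
      have h' := hs3 (Pr hn s (g1 hk) (g0 hk) (g0 hk))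
      rw [z3] at h'
      linarith
    have s4 : x (e0 hn) (Pr hn s (g1 hk) (g1 hk) (g0 hk)) + x (e2 hn) (Pr hn s (g1 hk) (g1 hk) (g0 hk)) = 1 := by
      have h' := hs3 (Pr hn s (g1 hk) (g1 hk) (g0 hk))
      rw [z4] at h'
      linarith
    have s5 : x (e0 hn) (Pr hn s (g1 hk) (g1 hk) (g1 hk)) + x (e2 hn) (Pr hn s (g1 hk) (g1 hk) (g1 hk)) = 1 := by
      have h' := hs3 (Pr hn s (g1 hk) (g1 hk) (g1 hk))
      rw [z5] at h'
      linarith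
    have s6 : x (e0 hn) (Pr hn s A2 (g1 hk) (g1 hk)) + x (e1 hn) (Pr hn s A2 (g1 hk) (g1 hk)) = 1 := by
      have h' := hs3 (Pr hn s A2 (g1 hk) (g1 hk))
      rw [z6] at h'
      linarith
    have s7 : x (e1 hn) (Pr hn s A2 (g0 hk) (g1 hk)) + x (e2 hn) (Pr hn s A2 (g0 hk) (g1 hk)) = 1 := by
      have h' := hs3 (Pr hn s A2 (g0 hk) (g1 hk))
      rw [z7] at h'
      linarith
    have s8 : x (e0 hn) (Pr hn s A2 (g0 hk) (g0 hk)) + x (e2 hn) (Pr hn s A2 (g0 hk) (g0 hk)) = 1 := by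
      have h' := hs3 (Pr hn s A2 (g0 hk) (g0 hk))
      rw [z8] at h'
      linarith
    have t1 := ht (e1 hn) (Pr hn s (g0 hk) (g0 hk) (g0 hk)) (g0 hk) (g1 hk) hlt01 (by
      rw [Pru1, Pru1, y1P, y1P, c0, c1,
        show HB 0 0 0 = 1 from by decide, show HB 0 1 0 = 1 from by decide])
    rw [Pru1, Pru1] at t1
    have t2 := ht (e0 hn) (Pr hn s (g0 hk) (g1 hk) (g0 hk)) (g0 hk) (g1 hk) hlt01 (by
      rw [Pru0, Pru0, y0P, y0P, c0, c1,
        show HA 0 1 0 = 1 from by decide, show HA 1 1 0 = 1 from by decide])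
    rw [Pru0, Pru0] at t2
    have t3 := ht (e2 hn) (Pr hn s (g1 hk) (g1 hk) (g0 hk)) (g0 hk) (g1 hk) hlt01 (by
      rw [Pru2, Pru2, y2P, y2P, c0, c1,
        show HC 1 1 0 = 1 from by decide, show HC 1 1 1 = 1 from by decide])
    rw [Pru2, Pru2] at t3
    have t4 := ht (e0 hn) (Pr hn s (g1 hk) (g1 hk) (g1 hk)) (g1 hk) A2 hlt1A (by
      rw [Pru0, Pru0, y0P, y0P, c1, c2,
        show HA 1 1 1 = 1 from by decide, show HA 2 1 1 = 1 from by decide])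
    rw [Pru0, Pru0] at t4
    have t5 := ht (e1 hn) (Pr hn s A2 (g0 hk) (g1 hk)) (g0 hk) (g1 hk) hlt01 (by
      rw [Pru1, Pru1, y1P, y1P, c0, c1, c2,
        show HB 2 0 1 = 1 from by decide, show HB 2 1 1 = 1 from by decide])
    rw [Pru1, Pru1] at t5
    have t6 := ht (e2 hn) (Pr hn s A2 (g0 hk) (g0 hk)) (g0 hk) (g1 hk) hlt01 (by
      rw [Pru2, Pru2, y2P, y2P, c0, c1, c2,
        show HC 2 0 0 = 1 from by decide, show HC 2 0 1 = 1 from by decide])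
    rw [Pru2, Pru2] at t6
    have t7 := ht (e0 hn) (Pr hn s (g0 hk) (g0 hk) (g0 hk)) (g0 hk) A2 hlt0A (by
      rw [Pru0, Pru0, y0P, y0P, c0, c2,
        show HA 0 0 0 = 1 from by decide, show HA 2 0 0 = 1 from by decide])
    rw [Pru0, Pru0] at t7
    have t8 := ht (e0 hn) (Pr hn s (g0 hk) (g0 hk) (g0 hk)) (g0 hk) (g1 hk) hlt01 (by
      rw [Pru0, Pru0, y0P, y0P, c0, c1,
        show HA 0 0 0 = 1 from by decide, show HA 1 0 0 = 1 from by decide])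
    rw [Pru0, Pru0] at t8
    refine ⟨by linarith, by linarith, by linarith, by linarith, by linarith, by linarith, by linarith, by linarith, by linarith, by linarith, by linarith, by linarith, by linarith, by linarith, by linarith, by linarith⟩
  funext i s
  rcases Nat.lt_or_ge i.val 3 with hi | hi
  · interval_cases h : i.val
    · have hie : i = e0 hn := Fin.ext h
      subst hie
      have hle := HAle (cl (s (e0 hn))) (cl (s (e1 hn))) (cl (s (e2 hn)))
      have htri : HA (cl (s (e0 hn))) (cl (s (e1 hn))) (cl (s (e2 hn))) = 0 ∨
          HA (cl (s (e0 hn))) (cl (s (e1 hn))) (cl (s (e2 hn))) = 1 ∨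
          HA (cl (s (e0 hn))) (cl (s (e1 hn))) (cl (s (e2 hn))) = 2 := by omega
      rcases htri with hv | hv | hv
      · rw [Yapp0, hv]
        norm_num
        exact h0 _ _ (by rw [Yapp0, hv]; norm_num)
      · have hd : ∀ a b c : Fin 3, HA a b c = 1 → ((a = 0 ∧ b = 0 ∧ c = 0) ∨ (a = 0 ∧ b = 1 ∧ c = 0) ∨ (a = 1 ∧ b = 0 ∧ c = 0) ∨ (a = 1 ∧ b = 1 ∧ c = 0) ∨ (a = 1 ∧ b = 1 ∧ c = 1) ∨ (a = 2 ∧ b = 0 ∧ c = 0) ∨ (a = 2 ∧ b = 1 ∧ c = 1)) := by decide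
        rcases hd _ _ _ hv with ⟨ha, hb, hc⟩|⟨ha, hb, hc⟩|⟨ha, hb, hc⟩|⟨ha, hb, hc⟩|⟨ha, hb, hc⟩|⟨ha, hb, hc⟩|⟨ha, hb, hc⟩
        · have hP := Prself hn s
          have ha' := cl_eq0 hk ha
          have hb' := cl_eq0 hk hb
          have hc' := cl_eq0 hk hc
          rw [ha', hb', hc'] at hP
          obtain ⟨q1, -, -, -, -, -, -, -, -, -, -, -, -, -, -, -⟩ := cyc ⟨2, by omega⟩ (by norm_num) s
          rw [Yapp0, hv, ← hP]
          exact_mod_cast q1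
        · have hP := Prself hn s
          have ha' := cl_eq0 hk ha
          have hb' := cl_eq1 hk hb
          have hc' := cl_eq0 hk hc
          rw [ha', hb', hc'] at hP
          obtain ⟨-, -, q3, -, -, -, -, -, -, -, -, -, -, -, -, -⟩ := cyc ⟨2, by omega⟩ (by norm_num) s
          rw [Yapp0, hv, ← hP]
          exact_mod_cast q3
        · have hP := Prself hn s
          have ha' := cl_eq1 hk ha
          have hb' := cl_eq0 hk hb
          have hc' := cl_eq0 hk hc
          rw [ha', hb', hc'] at hP
          obtain ⟨-, -, -, -, q5, -, -, -, -, -, -, -, -, -, -, -⟩ := cyc ⟨2, by omega⟩ (by norm_num) s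
          rw [Yapp0, hv, ← hP]
          exact_mod_cast q5
        · have hP := Prself hn s
          have ha' := cl_eq1 hk ha
          have hb' := cl_eq1 hk hb
          have hc' := cl_eq0 hk hc
          rw [ha', hb', hc'] at hP
          obtain ⟨-, -, -, -, -, -, q7, -, -, -, -, -, -, -, -, -⟩ := cyc ⟨2, by omega⟩ (by norm_num) s
          rw [Yapp0, hv, ← hP]
          exact_mod_cast q7
        · have hP := Prself hn s
          have ha' := cl_eq1 hk ha
          have hb' := cl_eq1 hk hb
          have hc' := cl_eq1 hk hc
          rw [ha', hb', hc'] at hP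
          obtain ⟨-, -, -, -, -, -, -, -, q9, -, -, -, -, -, -, -⟩ := cyc ⟨2, by omega⟩ (by norm_num) s
          rw [Yapp0, hv, ← hP]
          exact_mod_cast q9
        · have hP := Prself hn s
          have hb' := cl_eq0 hk hb
          have hc' := cl_eq0 hk hc
          rw [hb', hc'] at hP
          have hA2 := cl_eq2 ha
          obtain ⟨-, -, -, -, -, -, -, -, -, -, -, -, -, -, q15, -⟩ := cyc (s (e0 hn)) hA2 s
          rw [Yapp0, hv, ← hP]
          exact_mod_cast q15
        · have hP := Prself hn s
          have hb' := cl_eq1 hk hb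
          have hc' := cl_eq1 hk hc
          rw [hb', hc'] at hP
          have hA2 := cl_eq2 ha
          obtain ⟨-, -, -, -, -, -, -, -, -, -, q11, -, -, -, -, -⟩ := cyc (s (e0 hn)) hA2 s
          rw [Yapp0, hv, ← hP]
          exact_mod_cast q11
      · rw [Yapp0, hv]
        norm_num
        exact h1 _ _ (by rw [Yapp0, hv]; norm_num)
    · have hie : i = e1 hn := Fin.ext h
      subst hie
      have hle := HBle (cl (s (e0 hn))) (cl (s (e1 hn))) (cl (s (e2 hn)))
      have htri : HB (cl (s (e0 hn))) (cl (s (e1 hn))) (cl (s (e2 hn))) = 0 ∨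
          HB (cl (s (e0 hn))) (cl (s (e1 hn))) (cl (s (e2 hn))) = 1 ∨
          HB (cl (s (e0 hn))) (cl (s (e1 hn))) (cl (s (e2 hn))) = 2 := by omega
      rcases htri with hv | hv | hv
      · rw [Yapp1, hv]
        norm_num
        exact h0 _ _ (by rw [Yapp1, hv]; norm_num)
      · have hd : ∀ a b c : Fin 3, HB a b c = 1 → ((a = 0 ∧ b = 0 ∧ c = 0) ∨ (a = 0 ∧ b = 1 ∧ c = 0) ∨ (a = 2 ∧ b = 0 ∧ c = 1) ∨ (a = 2 ∧ b = 1 ∧ c = 1)) := by decide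
        rcases hd _ _ _ hv with ⟨ha, hb, hc⟩|⟨ha, hb, hc⟩|⟨ha, hb, hc⟩|⟨ha, hb, hc⟩
        · have hP := Prself hn s
          have ha' := cl_eq0 hk ha
          have hb' := cl_eq0 hk hb
          have hc' := cl_eq0 hk hc
          rw [ha', hb', hc'] at hP
          obtain ⟨-, q2, -, -, -, -, -, -, -, -, -, -, -, -, -, -⟩ := cyc ⟨2, by omega⟩ (by norm_num) s
          rw [Yapp1, hv, ← hP]
          exact_mod_cast q2
        · have hP := Prself hn s
          have ha' := cl_eq0 hk ha
          have hb' := cl_eq1 hk hb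
          have hc' := cl_eq0 hk hc
          rw [ha', hb', hc'] at hP
          obtain ⟨-, -, -, q4, -, -, -, -, -, -, -, -, -, -, -, -⟩ := cyc ⟨2, by omega⟩ (by norm_num) s
          rw [Yapp1, hv, ← hP]
          exact_mod_cast q4
        · have hP := Prself hn s
          have hb' := cl_eq0 hk hb
          have hc' := cl_eq1 hk hc
          rw [hb', hc'] at hP
          have hA2 := cl_eq2 ha
          obtain ⟨-, -, -, -, -, -, -, -, -, -, -, -, q13, -, -, -⟩ := cyc (s (e0 hn)) hA2 s
          rw [Yapp1, hv, ← hP]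
          exact_mod_cast q13
        · have hP := Prself hn s
          have hb' := cl_eq1 hk hb
          have hc' := cl_eq1 hk hc
          rw [hb', hc'] at hP
          have hA2 := cl_eq2 ha
          obtain ⟨-, -, -, -, -, -, -, -, -, -, -, q12, -, -, -, -⟩ := cyc (s (e0 hn)) hA2 s
          rw [Yapp1, hv, ← hP]
          exact_mod_cast q12
      · rw [Yapp1, hv]
        norm_num
        exact h1 _ _ (by rw [Yapp1, hv]; norm_num)
    · have hie : i = e2 hn := Fin.ext h
      subst hie
      have hle := HCle (cl (s (e0 hn))) (cl (s (e1 hn))) (cl (s (e2 hn)))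
      have htri : HC (cl (s (e0 hn))) (cl (s (e1 hn))) (cl (s (e2 hn))) = 0 ∨
          HC (cl (s (e0 hn))) (cl (s (e1 hn))) (cl (s (e2 hn))) = 1 ∨
          HC (cl (s (e0 hn))) (cl (s (e1 hn))) (cl (s (e2 hn))) = 2 := by omega
      rcases htri with hv | hv | hv
      · rw [Yapp2, hv]
        norm_num
        exact h0 _ _ (by rw [Yapp2, hv]; norm_num)
      · have hd : ∀ a b c : Fin 3, HC a b c = 1 → ((a = 1 ∧ b = 0 ∧ c = 0) ∨ (a = 1 ∧ b = 1 ∧ c = 0) ∨ (a = 1 ∧ b = 1 ∧ c = 1) ∨ (a = 2 ∧ b = 0 ∧ c = 0) ∨ (a = 2 ∧ b = 0 ∧ c = 1)) := by decide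
        rcases hd _ _ _ hv with ⟨ha, hb, hc⟩|⟨ha, hb, hc⟩|⟨ha, hb, hc⟩|⟨ha, hb, hc⟩|⟨ha, hb, hc⟩
        · have hP := Prself hn s
          have ha' := cl_eq1 hk ha
          have hb' := cl_eq0 hk hb
          have hc' := cl_eq0 hk hc
          rw [ha', hb', hc'] at hP
          obtain ⟨-, -, -, -, -, q6, -, -, -, -, -, -, -, -, -, -⟩ := cyc ⟨2, by omega⟩ (by norm_num) s
          rw [Yapp2, hv, ← hP]
          exact_mod_cast q6
        · have hP := Prself hn s
          have ha' := cl_eq1 hk ha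
          have hb' := cl_eq1 hk hb
          have hc' := cl_eq0 hk hc
          rw [ha', hb', hc'] at hP
          obtain ⟨-, -, -, -, -, -, -, q8, -, -, -, -, -, -, -, -⟩ := cyc ⟨2, by omega⟩ (by norm_num) s
          rw [Yapp2, hv, ← hP]
          exact_mod_cast q8
        · have hP := Prself hn s
          have ha' := cl_eq1 hk ha
          have hb' := cl_eq1 hk hb
          have hc' := cl_eq1 hk hc
          rw [ha', hb', hc'] at hP
          obtain ⟨-, -, -, -, -, -, -, -, -, q10, -, -, -, -, -, -⟩ := cyc ⟨2, by omega⟩ (by norm_num) s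
          rw [Yapp2, hv, ← hP]
          exact_mod_cast q10
        · have hP := Prself hn s
          have hb' := cl_eq0 hk hb
          have hc' := cl_eq0 hk hc
          rw [hb', hc'] at hP
          have hA2 := cl_eq2 ha
          obtain ⟨-, -, -, -, -, -, -, -, -, -, -, -, -, -, -, q16⟩ := cyc (s (e0 hn)) hA2 s
          rw [Yapp2, hv, ← hP]
          exact_mod_cast q16
        · have hP := Prself hn s
          have hb' := cl_eq0 hk hb
          have hc' := cl_eq1 hk hc
          rw [hb', hc'] at hP
          have hA2 := cl_eq2 ha
          obtain ⟨-, -, -, -, -, -, -, -, -, -, -, -, -, q14, -, -⟩ := cyc (s (e0 hn)) hA2 s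
          rw [Yapp2, hv, ← hP]
          exact_mod_cast q14
      · rw [Yapp2, hv]
        norm_num
        exact h1 _ _ (by rw [Yapp2, hv]; norm_num)
  · rw [Yapp3 hn i hi]
    exact h0 i s (Yapp3 hn i hi s)

/-- for `n ≥ 3` and `k ≥ 3`, the truthful polytope for the natural orderings
has a non-integral extreme point. -/
theorem stmt8 (n k : ℕ) (hn : 3 ≤ n) (hk : 3 ≤ k) :
    ∃ y ∈ Set.extremePoints ℝ {x : Fin n → (Fin n → Fin k) → ℝ | InT x},
      ∃ i s, 0 < y i s ∧ y i s < 1 := by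
  refine ⟨Y (k := k) hn, ⟨Ymem hn, ?_⟩, e0 hn, (fun _ => g0 hk), ?_, ?_⟩
  · intro x1 hx1 x2 hx2 hseg
    obtain ⟨a, b, ha, hb, hab, hsum⟩ := hseg
    have hpt : ∀ (i : Fin n) (s : Fin n → Fin k), a * x1 i s + b * x2 i s = Y hn i s := by
      intro i s
      have h' := congrFun (congrFun hsum i) s
      simpa using h'
    have main : ∀ (c d : ℝ), 0 < c → 0 < d → c + d = 1 →
        ∀ u v : Fin n → (Fin n → Fin k) → ℝ, InT u → InT v →
        (∀ i s, c * u i s + d * v i s = Y hn i s) → u = Y hn := by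
      intro c d hc hd hcd u v hu hv hp
      apply chase hn hk
      · intro i s hY
        have h' := hp i s
        rw [hY] at h'
        have e' : c * u i s = 0 := by
          nlinarith [mul_nonneg hc.le (hu.1 i s).1, mul_nonneg hd.le (hv.1 i s).1]
        rcases mul_eq_zero.mp e' with h'' | h''
        · exact absurd h'' hc.ne'
        · exact h''
      · intro i s hY
        have h' := hp i s
        rw [hY] at h'
        have e' : c * (1 - u i s) = 0 := by
          nlinarith [mul_nonneg hc.le (sub_nonneg.mpr (hu.1 i s).2),
            mul_nonneg hd.le (sub_nonneg.mpr (hv.1 i s).2)]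
        rcases mul_eq_zero.mp e' with h'' | h''
        · exact absurd h'' hc.ne'
        · linarith
      · intro i s cc dd hlt hYeq
        have m1 := hu.2.2 i s cc dd hlt
        have m2 := hv.2.2 i s cc dd hlt
        have p1 := hp i (Function.update s i cc)
        have p2 := hp i (Function.update s i dd)
        rw [hYeq] at p1
        have e' : c * (u i (Function.update s i dd) - u i (Function.update s i cc)) = 0 := by
          nlinarith [mul_nonneg hc.le (sub_nonneg.mpr m1), mul_nonneg hd.le (sub_nonneg.mpr m2)]
        rcases mul_eq_zero.mp e' with h'' | h''
        · exact absurd h'' hc.ne'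
        · linarith
      · exact hu.2.1
    have hr1 : x1 = Y hn := main a b ha hb hab x1 x2 hx1 hx2 hpt
    have hr2 : x2 = Y hn := main b a hb ha (by linarith) x2 x1 hx2 hx1
      (fun i s => by rw [← hpt i s]; ring)
    exact hr1
  · rw [Yapp0, clg0, show HA 0 0 0 = 1 from by decide]
    norm_num
  · rw [Yapp0, clg0, show HA 0 0 0 = 1 from by decide]
    norm_num

end Stmt8
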